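/- arXiv:2402.02560 — 3 statements merged into one kernel-verified Lean document; each statement's English description precedes it below -/
import Mathlib

section
/- Let F ∈ L_t and G ∈ L_s be polynomial vector fields on ℝⁿ with homogeneous components of degrees t+1 and s+1, and set ℓ = (t+1)/(s+1). Then [F,G] = 0 identically if and only if M(x) · x = 0 for all x ∈ ℝⁿ, where M(x) = (dG/dx)(x)(dF/dx)(x) − ℓ · (dF/dx)(x)(dG/dx)(x). -/
open MvPolynomial

/-- The Lie bracket `[F,G](x) = (dG/dx)(x) F(x) − (dF/dx)(x) G(x)` of polynomial vector
fields on `ℝⁿ`. -/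
noncomputable def bracket {n : ℕ} (F G : Fin n → MvPolynomial (Fin n) ℝ) :
    Fin n → MvPolynomial (Fin n) ℝ :=
  fun i => (∑ j, pderiv j (G i) * F j) - ∑ j, pderiv j (F i) * G j

/-- The Jacobian matrix of a polynomial vector field, evaluated at a point `x ∈ ℝⁿ`. -/
noncomputable def jacEval {n : ℕ} (F : Fin n → MvPolynomial (Fin n) ℝ) (x : Fin n → ℝ) :
    Matrix (Fin n) (Fin n) ℝ :=
  fun i j => eval x (pderiv j (F i))


lemma euler_monomial {n : ℕ} (m : Fin n →₀ ℕ) (c : ℝ) :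
    ∑ j, X j * pderiv j (monomial m c : MvPolynomial (Fin n) ℝ)
      = (∑ j, m j) • monomial m c := by
  rw [Finset.sum_smul]
  refine Finset.sum_congr rfl fun j _ => ?_
  rw [pderiv_monomial, X, monomial_mul, one_mul]
  rcases Nat.eq_zero_or_pos (m j) with h | h
  · simp [h]
  · rw [add_comm, tsub_add_cancel_of_le (Finsupp.single_le_iff.mpr h)]
    rw [nsmul_eq_mul]
    rw [← C_eq_coe_nat, C_mul_monomial, mul_comm]

lemma euler {n d : ℕ} {p : MvPolynomial (Fin n) ℝ} (hp : p.IsHomogeneous d) :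
    ∑ j, X j * pderiv j p = d • p := by
  conv_lhs => rw [p.as_sum]
  conv_rhs => rw [p.as_sum]
  simp only [map_sum, Finset.mul_sum, Finset.smul_sum]
  rw [Finset.sum_comm]
  refine Finset.sum_congr rfl fun m hm => ?_
  rw [euler_monomial]
  congr 1
  have := hp (mem_support_iff.mp hm)
  rw [← this]
  simp [Finsupp.weight_apply, Finsupp.sum_fintype, smul_eq_mul]

lemma euler_eval {n d : ℕ} (x : Fin n → ℝ) {p : MvPolynomial (Fin n) ℝ}
    (hp : p.IsHomogeneous d) :
    ∑ j, eval x (pderiv j p) * x j = (d : ℝ) * eval x p := by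
  have := congrArg (eval x) (euler hp)
  simp only [map_sum, map_mul, eval_X, nsmul_eq_mul, map_natCast] at this
  rw [show ∑ j, eval x (pderiv j p) * x j = ∑ j, x j * eval x (pderiv j p) from
    Finset.sum_congr rfl fun j _ => mul_comm _ _, this]

lemma key {n : ℕ} (t s : ℕ) (F G : Fin n → MvPolynomial (Fin n) ℝ)
    (hF : ∀ i, (F i).IsHomogeneous (t + 1)) (hG : ∀ i, (G i).IsHomogeneous (s + 1))
    (x : Fin n → ℝ) (i : Fin n) :
    (jacEval G x * jacEval F x
        - (((t : ℝ) + 1) / ((s : ℝ) + 1)) • (jacEval F x * jacEval G x)).mulVec x i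
      = ((t : ℝ) + 1) * eval x (bracket F G i) := by
  have hs1 : ((s : ℝ) + 1) ≠ 0 := by positivity
  have swap : ∀ (A B : Matrix (Fin n) (Fin n) ℝ),
      ∑ j, (A * B) i j * x j = ∑ k, A i k * ∑ j, B k j * x j := by
    intro A B
    simp only [Matrix.mul_apply, Finset.sum_mul, Finset.mul_sum, mul_assoc]
    exact Finset.sum_comm
  have h1 : ∀ k, ∑ j, jacEval F x k j * x j = ((t : ℝ) + 1) * eval x (F k) := by
    intro k
    have := euler_eval x (hF k)
    push_cast at this
    exact this
  have h2 : ∀ k, ∑ j, jacEval G x k j * x j = ((s : ℝ) + 1) * eval x (G k) := by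
    intro k
    have := euler_eval x (hG k)
    push_cast at this
    exact this
  have hmv : (jacEval G x * jacEval F x
        - (((t : ℝ) + 1) / ((s : ℝ) + 1)) • (jacEval F x * jacEval G x)).mulVec x i
      = ∑ j, (jacEval G x * jacEval F x) i j * x j
        - ((t : ℝ) + 1) / ((s : ℝ) + 1) * ∑ j, (jacEval F x * jacEval G x) i j * x j := by
    simp only [Matrix.mulVec, dotProduct, Matrix.sub_apply, Matrix.smul_apply,
      smul_eq_mul, sub_mul, Finset.sum_sub_distrib, Finset.mul_sum, mul_assoc]
  rw [hmv, swap, swap]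
  simp only [h1, h2]
  have : ∑ k, jacEval F x i k * (((s : ℝ) + 1) * eval x (G k))
      = ((s : ℝ) + 1) * ∑ k, jacEval F x i k * eval x (G k) := by
    rw [Finset.mul_sum]; exact Finset.sum_congr rfl fun k _ => by ring
  rw [this]
  have : ∑ k, jacEval G x i k * (((t : ℝ) + 1) * eval x (F k))
      = ((t : ℝ) + 1) * ∑ k, jacEval G x i k * eval x (F k) := by
    rw [Finset.mul_sum]; exact Finset.sum_congr rfl fun k _ => by ring
  rw [this]
  have heval : eval x (bracket F G i)
      = ∑ k, jacEval G x i k * eval x (F k) - ∑ k, jacEval F x i k * eval x (G k) := by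
    simp [bracket, jacEval]
  rw [heval]
  field_simp

/-- For `F ∈ L_t`, `G ∈ L_s` and `ℓ = (t+1)/(s+1)`: `[F,G] = 0` identically if and only if
`M(x) · x = 0` for all `x ∈ ℝⁿ`, where
`M(x) = (dG/dx)(x)(dF/dx)(x) − ℓ (dF/dx)(x)(dG/dx)(x)`. -/
theorem bracket_zero_iff {n : ℕ} (t s : ℕ) (F G : Fin n → MvPolynomial (Fin n) ℝ)
    (hF : ∀ i, (F i).IsHomogeneous (t + 1)) (hG : ∀ i, (G i).IsHomogeneous (s + 1)) :
    bracket F G = 0 ↔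
      ∀ x : Fin n → ℝ,
        (jacEval G x * jacEval F x
            - (((t : ℝ) + 1) / ((s : ℝ) + 1)) • (jacEval F x * jacEval G x)).mulVec x = 0 := by
  constructor
  · intro h x
    funext i
    rw [key t s F G hF hG x i, h]
    simp
  · intro h
    funext i
    refine MvPolynomial.funext fun x => ?_
    have := congrFun (h x) i
    rw [key t s F G hF hG x i] at this
    have ht : ((t : ℝ) + 1) ≠ 0 := by positivity
    simpa [ht] using this
end

section
/- Let p ≥ 1 and F_p(x) = (1/(p+1)) · (x_1^{p+1}, …, x_n^{p+1}) on ℝⁿ. Then the kernel of ad(F_p) restricted to L_p is exactly the ℝ-linear span of the n vector fields g_i(x) = x_i^{p+1} e_i (i = 1,…,n), where e_i is the i-th standard basis vector; i.e. G ∈ L_p satisfies [F_p, G] = 0 if and only if G is a linear combination of g_1,…,g_n. -/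
open MvPolynomial

lemma coeff_mul_X_pow'' {n : ℕ} (j : Fin n) (m : ℕ) (Q : MvPolynomial (Fin n) ℝ)
    (β : Fin n →₀ ℕ) :
    coeff β (Q * X j ^ m) =
      if m ≤ β j then coeff (β - Finsupp.single j m) Q else 0 := by
  rw [X_pow_eq_monomial, coeff_mul_monomial']
  simp [Finsupp.single_le_iff]

lemma coeff_pderiv' {n : ℕ} (j : Fin n) (Q : MvPolynomial (Fin n) ℝ) (γ : Fin n →₀ ℕ) :
    coeff γ (pderiv j Q) = ((γ j + 1 : ℕ) : ℝ) * coeff (γ + Finsupp.single j 1) Q := by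
  induction Q using MvPolynomial.induction_on' with
  | add f g hf hg => simp [hf, hg, mul_add]
  | monomial s a =>
    rw [pderiv_monomial, coeff_monomial, coeff_monomial]
    by_cases h : s = γ + Finsupp.single j 1
    · subst h
      have h1 : (γ + Finsupp.single j 1) - Finsupp.single j 1 = γ :=
        add_tsub_cancel_right _ _
      rw [if_pos h1, if_pos rfl]
      have h2 : (γ + Finsupp.single j 1 : Fin n →₀ ℕ) j = γ j + 1 := by simp
      rw [h2]; push_cast; ring
    · rw [if_neg h]
      by_cases hc : s - Finsupp.single j 1 = γ
      · have hsj : s j = 0 := by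
          by_contra hsj
          apply h
          ext t
          have ht : (s - Finsupp.single j 1 : Fin n →₀ ℕ) t = γ t := by rw [hc]
          rw [Finsupp.tsub_apply] at ht
          rcases eq_or_ne t j with rfl | htj
          · simp only [Finsupp.single_eq_same] at ht ⊢
            simp only [Finsupp.add_apply, Finsupp.single_eq_same]
            omega
          · simp only [Finsupp.single_eq_of_ne' (Ne.symm htj)] at ht ⊢
            simp [Finsupp.single_eq_of_ne' (Ne.symm htj), ← ht]
        rw [if_pos hc, hsj]; simp
      · rw [if_neg hc, mul_zero]

lemma coeff_pderiv_mul {n : ℕ} (p : ℕ) (j : Fin n) (Q : MvPolynomial (Fin n) ℝ)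
    (β : Fin n →₀ ℕ) :
    coeff β (pderiv j Q * X j ^ (p + 1)) =
      if p + 1 ≤ β j then ((β j - p : ℕ) : ℝ) * coeff (β - Finsupp.single j p) Q else 0 := by
  rw [coeff_mul_X_pow'']
  split_ifs with h
  · rw [coeff_pderiv']
    have h1 : (β - Finsupp.single j (p + 1) : Fin n →₀ ℕ) j + 1 = β j - p := by
      simp only [Finsupp.tsub_apply, Finsupp.single_eq_same]; omega
    have h2 : β - Finsupp.single j (p + 1) + Finsupp.single j 1 = β - Finsupp.single j p := by
      ext t
      rcases eq_or_ne t j with rfl | htj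
      · simp only [Finsupp.add_apply, Finsupp.tsub_apply, Finsupp.single_eq_same]; omega
      · simp [Finsupp.single_eq_of_ne' (Ne.symm htj)]
    rw [h1, h2]
  · rfl

/-- For `p ≥ 1` and `F_p(x) = (1/(p+1)) (x_1^{p+1}, …, x_n^{p+1})`, the kernel of
`ad(F_p)` on `L_p` is exactly the ℝ-span of the vector fields `g_i(x) = x_i^{p+1} e_i`:
a `G ∈ L_p` satisfies `[F_p, G] = 0` iff `G = Σᵢ cᵢ gᵢ`, i.e. the `i`-th component of
`G` is `cᵢ xᵢ^{p+1}`. -/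
theorem ad_Fp_kernel {n : ℕ} (p : ℕ) (hp : 1 ≤ p)
    (G : Fin n → MvPolynomial (Fin n) ℝ)
    (hG : ∀ i, (G i).IsHomogeneous (p + 1)) :
    bracket (fun i => C (((p : ℝ) + 1)⁻¹) * X i ^ (p + 1)) G = 0 ↔
      ∃ c : Fin n → ℝ, G = fun i => C (c i) * X i ^ (p + 1) := by
  have hne : ((p : ℝ) + 1) ≠ 0 := by positivity
  have hCC : (C ((p : ℝ) + 1) : MvPolynomial (Fin n) ℝ) * C (((p : ℝ) + 1)⁻¹) = 1 := by
    rw [← C_mul, mul_inv_cancel₀ hne, C_1]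
  have hCC2 : (C (((p : ℝ) + 1)⁻¹) : MvPolynomial (Fin n) ℝ) * C ((p : ℝ) + 1) = 1 := by
    rw [← C_mul, inv_mul_cancel₀ hne, C_1]
  have hNat : ((p + 1 : ℕ) : MvPolynomial (Fin n) ℝ) = C ((p : ℝ) + 1) := by
    push_cast
    simp [map_add, map_natCast]
  have hpd : ∀ i j : Fin n,
      pderiv j (C (((p : ℝ) + 1)⁻¹) * X i ^ (p + 1) : MvPolynomial (Fin n) ℝ)
        = if j = i then C (((p : ℝ) + 1)⁻¹) * (C ((p : ℝ) + 1) * X i ^ p) else 0 := by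
    intro i j
    rcases eq_or_ne j i with rfl | hj
    · rw [if_pos rfl, pderiv_C_mul, pderiv_pow, pderiv_X_self, ← hNat]
      push_cast
      ring
    · rw [if_neg hj, pderiv_C_mul, pderiv_pow, pderiv_X_of_ne hj.symm]
      ring
  constructor
  · intro h
    have key : ∀ i, ∑ j, pderiv j (G i) * X j ^ (p + 1)
        = C ((p : ℝ) + 1) * (X i ^ p * G i) := by
      intro i
      have h0 := congrFun h i
      simp only [bracket, Pi.zero_apply, sub_eq_zero] at h0
      have h3 : (∑ j, pderiv j (C (((p : ℝ) + 1)⁻¹) * X i ^ (p + 1) : MvPolynomial (Fin n) ℝ)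
          * G j) = X i ^ p * G i := by
        rw [Finset.sum_eq_single i]
        · rw [hpd i i, if_pos rfl, ← mul_assoc, hCC2, one_mul]
        · intro j _ hj; rw [hpd i j, if_neg hj, zero_mul]
        · simp
      have h4 : C ((p : ℝ) + 1) * ∑ j, pderiv j (G i)
            * (C (((p : ℝ) + 1)⁻¹) * X j ^ (p + 1))
          = ∑ j, pderiv j (G i) * X j ^ (p + 1) := by
        rw [Finset.mul_sum]
        refine Finset.sum_congr rfl fun j _ => ?_
        calc C ((p : ℝ) + 1) * (pderiv j (G i) * (C (((p : ℝ) + 1)⁻¹) * X j ^ (p + 1)))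
            = (C ((p : ℝ) + 1) * C (((p : ℝ) + 1)⁻¹)) * (pderiv j (G i) * X j ^ (p + 1)) := by
              ring
          _ = pderiv j (G i) * X j ^ (p + 1) := by rw [hCC, one_mul]
      rw [← h4, h0, h3]
    -- vanishing of all coefficients other than single i (p+1)
    have hvan : ∀ i, ∀ β : Fin n →₀ ℕ, β ≠ Finsupp.single i (p + 1) → coeff β (G i) = 0 := by
      intro i
      by_contra hβ
      push_neg at hβ
      obtain ⟨β₀, hβ₀ne, hβ₀⟩ := hβ
      set T := (G i).support.filter (fun α => α ≠ Finsupp.single i (p + 1)) with hT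
      have hTne : T.Nonempty := ⟨β₀, Finset.mem_filter.mpr ⟨mem_support_iff.mpr hβ₀, hβ₀ne⟩⟩
      obtain ⟨α, hαT, hmax⟩ :=
        Finset.exists_max_image T (fun α => Finset.sup (Finset.univ.erase i) α) hTne
      have hαsupp : α ∈ (G i).support := (Finset.mem_filter.mp hαT).1
      have hαne : α ≠ Finsupp.single i (p + 1) := (Finset.mem_filter.mp hαT).2
      have hαc : coeff α (G i) ≠ 0 := mem_support_iff.mp hαsupp
      -- existence of k0 ≠ i with α k0 ≥ 1
      have hk0 : ∃ k, k ≠ i ∧ 1 ≤ α k := by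
        by_contra hk
        push_neg at hk
        apply hαne
        have hzero : ∀ t, t ≠ i → α t = 0 := fun t ht => by have := hk t ht; omega
        have hdeg : (Finsupp.weight 1 α : ℕ) = p + 1 := hG i hαc
        rw [Finsupp.weight_apply] at hdeg
        have hsum : (α.sum fun _ c => c) = p + 1 := by simpa using hdeg
        rw [Finsupp.sum_fintype _ _ (fun _ => rfl)] at hsum
        have hαi : α i = p + 1 := by
          rw [Finset.sum_eq_single i (fun t _ ht => hzero t ht) (by simp)] at hsum
          exact hsum
        ext t
        rcases eq_or_ne t i with rfl | ht
        · simp [hαi]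
        · simp [Finsupp.single_eq_of_ne' (Ne.symm ht), hzero t ht]
      obtain ⟨k0, hk0i, hk0v⟩ := hk0
      have hk0mem : k0 ∈ Finset.univ.erase i := Finset.mem_erase.mpr ⟨hk0i, Finset.mem_univ _⟩
      have hne' : (Finset.univ.erase i).Nonempty := ⟨k0, hk0mem⟩
      obtain ⟨k, hkmem, hkeq⟩ := Finset.exists_mem_eq_sup (Finset.univ.erase i) hne' ⇑α
      have hki : k ≠ i := (Finset.mem_erase.mp hkmem).1
      have hM1 : 1 ≤ α k := by
        have := Finset.le_sup (f := ⇑α) hk0mem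
        omega
      -- vanishing for large k-coordinate
      have hbig : ∀ γ : Fin n →₀ ℕ, α k + 1 ≤ γ k → coeff γ (G i) = 0 := by
        intro γ hγ
        by_contra hc
        have hγT : γ ∈ T := Finset.mem_filter.mpr ⟨mem_support_iff.mpr hc, by
          intro hh
          rw [hh] at hγ
          rw [Finsupp.single_eq_of_ne' (Ne.symm hki)] at hγ
          omega⟩
        have h5 := hmax γ hγT
        have h6 : γ k ≤ Finset.sup (Finset.univ.erase i) γ :=
          Finset.le_sup (Finset.mem_erase.mpr ⟨hki, Finset.mem_univ _⟩)
        omega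
      -- coefficient equation at β = α + single k p
      set β : Fin n →₀ ℕ := α + Finsupp.single k p with hβdef
      have hβk : β k = α k + p := by simp [hβdef]
      have hβt : ∀ t, t ≠ k → β t = α t := fun t ht => by
        simp [hβdef, Finsupp.single_eq_of_ne' (Ne.symm ht)]
      have hE := congrArg (coeff β) (key i)
      rw [coeff_sum] at hE
      -- LHS collapses to the j = k term
      have hL : ∑ j, coeff β (pderiv j (G i) * X j ^ (p + 1))
          = ((α k : ℕ) : ℝ) * coeff α (G i) := by
        rw [Finset.sum_eq_single k]
        · rw [coeff_pderiv_mul, if_pos (by omega)]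
          have hβα : β - Finsupp.single k p = α := add_tsub_cancel_right _ _
          rw [hβα]
          congr 1
          congr 1
          omega
        · intro j _ hjk
          rw [coeff_pderiv_mul]
          split_ifs with hj
          · have : coeff (β - Finsupp.single j p) (G i) = 0 := by
              apply hbig
              rw [Finsupp.tsub_apply, Finsupp.single_eq_of_ne' hjk]
              omega
            rw [this, mul_zero]
          · rfl
        · simp
      rw [hL, coeff_C_mul, mul_comm (X i ^ p) (G i), coeff_mul_X_pow''] at hE
      have hR : (if p ≤ β i then coeff (β - Finsupp.single i p) (G i) else 0) = 0 := by
        split_ifs with hi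
        · apply hbig
          rw [Finsupp.tsub_apply, Finsupp.single_eq_of_ne' hki.symm]
          omega
        · rfl
      rw [hR, mul_zero] at hE
      have : coeff α (G i) = 0 := by
        have hαk : ((α k : ℕ) : ℝ) ≠ 0 := Nat.cast_ne_zero.mpr (by omega)
        exact (mul_eq_zero.mp hE).resolve_left hαk
      exact hαc this
    refine ⟨fun i => coeff (Finsupp.single i (p + 1)) (G i), funext fun i => ?_⟩
    ext β
    rw [coeff_C_mul, coeff_X_pow]
    rcases eq_or_ne β (Finsupp.single i (p + 1)) with rfl | hβ
    · rw [if_pos rfl, mul_one]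
    · rw [if_neg (Ne.symm hβ), mul_zero, hvan i β hβ]
  · rintro ⟨c, rfl⟩
    funext i
    simp only [bracket, Pi.zero_apply]
    rw [sub_eq_zero]
    have hs1 : (∑ j, pderiv j (C (c i) * X i ^ (p + 1) : MvPolynomial (Fin n) ℝ)
        * (C (((p : ℝ) + 1)⁻¹) * X j ^ (p + 1)))
        = (C (c i) * (C ((p : ℝ) + 1) * X i ^ p)) * (C (((p : ℝ) + 1)⁻¹) * X i ^ (p + 1)) := by
      rw [Finset.sum_eq_single i]
      · rw [pderiv_C_mul, pderiv_pow, pderiv_X_self, ← hNat]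
        push_cast
        ring
      · intro j _ hj
        rw [pderiv_C_mul, pderiv_pow, pderiv_X_of_ne hj.symm]
        ring
      · simp
    have hs2 : (∑ j, pderiv j (C (((p : ℝ) + 1)⁻¹) * X i ^ (p + 1) : MvPolynomial (Fin n) ℝ)
        * (C (c j) * X j ^ (p + 1)))
        = (C (((p : ℝ) + 1)⁻¹) * (C ((p : ℝ) + 1) * X i ^ p)) * (C (c i) * X i ^ (p + 1)) := by
      rw [Finset.sum_eq_single i]
      · rw [hpd i i, if_pos rfl]
      · intro j _ hj
        rw [hpd i j, if_neg hj, zero_mul]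
      · simp
    rw [hs1, hs2]
    ring
end

section
/- Let p ≥ 1 and let F = F_0 + F_1 + ⋯ + F_p be a polynomial vector field on ℝⁿ with F_i ∈ L_i and top term F_p(x) = (1/(p+1)) · (x_1^{p+1}, …, x_n^{p+1}). Then there is no centralizer of F of the form G = G_0 + ⋯ + G_j with G_i ∈ L_i, G_j ≠ 0 and j ≠ p; i.e. if G is a nonzero polynomial vector field with [F, G] = 0, then its highest-degree homogeneous component lies in L_p (has components of degree p+1). -/
open MvPolynomial

lemma coeff_pderiv'_s8 {σ : Type*} [DecidableEq σ] (k : σ) (f : MvPolynomial σ ℝ) (m : σ →₀ ℕ) :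
    coeff m (pderiv k f) = ((m k : ℝ) + 1) * coeff (m + Finsupp.single k 1) f := by
  induction f using MvPolynomial.induction_on' with
  | monomial s a =>
      rw [pderiv_monomial, coeff_monomial, coeff_monomial]
      by_cases h : s = m + Finsupp.single k 1
      · subst h
        rw [if_pos (add_tsub_cancel_right _ _)]
        simp [Finsupp.add_apply, Finsupp.single_eq_same]
        ring
      · rw [if_neg h, mul_zero]
        split_ifs with h2
        · rcases Nat.eq_zero_or_pos (s k) with h3 | h3
          · simp [h3]
          · have : s = m + Finsupp.single k 1 := by
              rw [← h2, tsub_add_cancel_of_le (Finsupp.single_le_iff.mpr h3)]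
            exact absurd this h
        · rfl
  | add f g hf hg => simp [hf, hg, mul_add]

lemma pderiv_isHomogeneous' {σ : Type*} [DecidableEq σ] {f : MvPolynomial σ ℝ} {d : ℕ}
    (hf : f.IsHomogeneous (d + 1)) (k : σ) : (pderiv k f).IsHomogeneous d := by
  intro m hm
  rw [coeff_pderiv'_s8] at hm
  have h2 : coeff (m + Finsupp.single k 1) f ≠ 0 := right_ne_zero_of_mul hm
  have h3 := hf h2
  rw [map_add] at h3
  have h4 : (Finsupp.weight (1 : σ → ℕ)) (Finsupp.single k 1) = 1 := by
    simp [Finsupp.weight_apply, Finsupp.sum_single_index]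
  omega

lemma bracket_sum {n : ℕ} (s t : Finset ℕ) (F G : ℕ → Fin n → MvPolynomial (Fin n) ℝ)
    (i : Fin n) :
    bracket (∑ a ∈ s, F a) (∑ b ∈ t, G b) i
      = ∑ a ∈ s, ∑ b ∈ t, bracket (F a) (G b) i := by
  simp only [bracket, Finset.sum_apply, map_sum, Finset.sum_mul, Finset.mul_sum,
    Finset.sum_sub_distrib]
  congr 1
  · rw [Finset.sum_comm]
    exact Finset.sum_congr rfl fun a _ => Finset.sum_comm
  · rw [Finset.sum_comm]
    rw [show (∑ b ∈ t, ∑ x : Fin n, ∑ a ∈ s, (pderiv x) (F a i) * G b x)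
        = ∑ b ∈ t, ∑ a ∈ s, ∑ x : Fin n, (pderiv x) (F a i) * G b x from
      Finset.sum_congr rfl fun b _ => Finset.sum_comm]
    exact Finset.sum_comm

lemma weight_one_single {σ : Type*} [DecidableEq σ] (i : σ) (r : ℕ) :
    (Finsupp.weight (1 : σ → ℕ)) (Finsupp.single i r) = r := by
  simp [Finsupp.weight_apply, Finsupp.sum_single_index]

/-- Let `p ≥ 1` and `F = F_0 + ⋯ + F_p` with `F_i ∈ L_i` and top term
`F_p(x) = (1/(p+1)) (x_1^{p+1}, …, x_n^{p+1})`.  There is no centralizer of `F` of the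
form `G = G_0 + ⋯ + G_j` with `G_i ∈ L_i`, `G_j ≠ 0` and `j ≠ p`: if
`[F, G_0 + ⋯ + G_j] = 0` and `G_j ≠ 0`, then `j = p`. -/
theorem centralizer_top_degree {n : ℕ} (p : ℕ) (hp : 1 ≤ p)
    (F : ℕ → Fin n → MvPolynomial (Fin n) ℝ)
    (hFhom : ∀ k i, (F k i).IsHomogeneous (k + 1))
    (hFtop : F p = fun i => C (((p : ℝ) + 1)⁻¹) * X i ^ (p + 1))
    (j : ℕ) (G : ℕ → Fin n → MvPolynomial (Fin n) ℝ)
    (hGhom : ∀ k i, (G k i).IsHomogeneous (k + 1))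
    (hGj : G j ≠ 0)
    (hcomm : bracket (∑ i ∈ Finset.range (p + 1), F i)
        (∑ i ∈ Finset.range (j + 1), G i) = 0) :
    j = p := by
  classical
  set c : ℝ := ((p : ℝ) + 1)⁻¹ with hc_def
  have hp1 : ((p : ℝ) + 1) ≠ 0 := by positivity
  have hc : c ≠ 0 := inv_ne_zero hp1
  -- Step 1: each bracket (F a) (G b) i is homogeneous of degree a+b+1
  have hbr_hom : ∀ a b (i : Fin n),
      bracket (F a) (G b) i ∈ homogeneousSubmodule (Fin n) ℝ (a + b + 1) := by
    intro a b i
    rw [mem_homogeneousSubmodule]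
    refine MvPolynomial.IsHomogeneous.sub ?_ ?_
    · have : (∑ k, pderiv k (G b i) * F a k) ∈ homogeneousSubmodule (Fin n) ℝ (a + b + 1) := by
        refine Submodule.sum_mem _ fun k _ => ?_
        rw [mem_homogeneousSubmodule]
        have h := (pderiv_isHomogeneous' (hGhom b i) k).mul (hFhom a k)
        rwa [show b + (a + 1) = a + b + 1 by ring] at h
      exact (mem_homogeneousSubmodule _ _).1 this
    · have : (∑ k, pderiv k (F a i) * G b k) ∈ homogeneousSubmodule (Fin n) ℝ (a + b + 1) := by
        refine Submodule.sum_mem _ fun k _ => ?_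
        rw [mem_homogeneousSubmodule]
        have h := (pderiv_isHomogeneous' (hFhom a i) k).mul (hGhom b k)
        rwa [show a + (b + 1) = a + b + 1 by ring] at h
      exact (mem_homogeneousSubmodule _ _).1 this
  -- Step 2: extract the top bracket
  have htop0 : ∀ i : Fin n, bracket (F p) (G j) i = 0 := by
    intro i
    have h := congrFun hcomm i
    rw [bracket_sum, Pi.zero_apply] at h
    have h2 := congrArg (homogeneousComponent (p + j + 1)) h
    rw [map_zero] at h2
    simp only [map_sum] at h2
    have h3 : (∑ a ∈ Finset.range (p + 1), ∑ b ∈ Finset.range (j + 1),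
        homogeneousComponent (p + j + 1) (bracket (F a) (G b) i))
        = bracket (F p) (G j) i := by
      rw [Finset.sum_eq_single p]
      · rw [Finset.sum_eq_single j]
        · rw [homogeneousComponent_of_mem (hbr_hom p j i), if_pos rfl]
        · intro b hb hbj
          rw [homogeneousComponent_of_mem (hbr_hom p b i), if_neg (by
            rw [Finset.mem_range] at hb; omega)]
        · intro h'
          exact absurd (Finset.self_mem_range_succ j) h'
      · intro a ha hap
        refine Finset.sum_eq_zero fun b hb => ?_
        rw [homogeneousComponent_of_mem (hbr_hom a b i), if_neg (by
          rw [Finset.mem_range] at ha hb; omega)]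
      · intro h'
        exact absurd (Finset.self_mem_range_succ p) h'
    rw [h3] at h2
    exact h2
  -- pick a component with G j i ≠ 0
  obtain ⟨i, hgi⟩ : ∃ i, G j i ≠ 0 := by
    by_contra h
    push_neg at h
    exact hGj (funext h)
  set g : MvPolynomial (Fin n) ℝ := G j i with hg_def
  -- Step 3: derive the PDE for g
  have hE : ∑ k, pderiv k g * (C c * X k ^ (p + 1)) = X i ^ p * g := by
    have h := htop0 i
    have h' : (∑ k, pderiv k (G j i) * F p k) = ∑ k, pderiv k (F p i) * G j k :=
      sub_eq_zero.mp h
    rw [hFtop] at h'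
    simp only at h'
    have hsec : (∑ k, pderiv k (C c * X i ^ (p + 1)) * G j k) = X i ^ p * g := by
      rw [Finset.sum_eq_single i]
      · rw [pderiv_C_mul, pderiv_pow, pderiv_X_self, Nat.add_sub_cancel]
        have hone : (C c : MvPolynomial (Fin n) ℝ) * ((p : MvPolynomial (Fin n) ℝ) + 1)
            = 1 := by
          have hcast : ((p : MvPolynomial (Fin n) ℝ) + 1) = C ((p : ℝ) + 1) := by
            rw [map_add, map_one, C_eq_coe_nat]
          rw [hcast, ← map_mul, hc_def, inv_mul_cancel₀ hp1, map_one]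
        rw [hg_def]
        push_cast
        linear_combination (X i ^ p * G j i) * hone
      · intro k _ hki
        rw [pderiv_C_mul, pderiv_pow, pderiv_X_of_ne (Ne.symm hki), mul_zero, mul_zero,
          zero_mul]
      · intro h''
        exact absurd (Finset.mem_univ i) h''
    rw [hsec] at h'
    exact h'
  -- Step 4: coefficient form of the PDE
  have hterm : ∀ (k : Fin n) (M : Fin n →₀ ℕ),
      coeff M (pderiv k g * (C c * X k ^ (p + 1)))
        = if Finsupp.single k (p + 1) ≤ M then
            c * ((((M - Finsupp.single k (p + 1)) k : ℝ) + 1)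
              * coeff (M - Finsupp.single k (p + 1) + Finsupp.single k 1) g)
          else 0 := by
    intro k M
    rw [mul_left_comm, coeff_C_mul, X_pow_eq_monomial, coeff_mul_monomial']
    split_ifs with h
    · rw [coeff_pderiv'_s8, mul_one]
    · rw [mul_zero]
  have hEq : ∀ M : Fin n →₀ ℕ,
      (∑ k, if Finsupp.single k (p + 1) ≤ M then
          c * ((((M - Finsupp.single k (p + 1)) k : ℝ) + 1)
            * coeff (M - Finsupp.single k (p + 1) + Finsupp.single k 1) g)
        else 0)
      = (if Finsupp.single i p ≤ M then coeff (M - Finsupp.single i p) g else 0) := by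
    intro M
    have h := congrArg (coeff M) hE
    rw [coeff_sum] at h
    rw [Finset.sum_congr rfl fun k _ => hterm k M] at h
    rw [X_pow_eq_monomial, coeff_monomial_mul'] at h
    simpa using h
  -- Step 5: g depends only on x_i
  have hA : ∀ k, k ≠ i → ∀ m ∈ g.support, m k = 0 := by
    intro k hk
    by_contra hcon
    push_neg at hcon
    obtain ⟨m0, hm0s, hm0⟩ := hcon
    obtain ⟨m, hms, hmax⟩ := Finset.exists_max_image g.support (fun m => m k) ⟨m0, hm0s⟩
    have hmk : 1 ≤ m k := le_trans (Nat.one_le_iff_ne_zero.2 hm0) (hmax m0 hm0s)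
    set M : Fin n →₀ ℕ := m + Finsupp.single k p with hM
    have hMk : M k = m k + p := by
      simp [hM, Finsupp.add_apply, Finsupp.single_eq_same]
    have hMl : ∀ l, l ≠ k → M l = m l := by
      intro l hl
      simp [hM, Finsupp.add_apply, Finsupp.single_apply, Ne.symm hl]
    have key := hEq M
    have hR : (if Finsupp.single i p ≤ M then coeff (M - Finsupp.single i p) g else 0) = 0 := by
      split_ifs with h
      · by_contra hne
        have hmem := hmax _ (mem_support_iff.2 hne)
        have h1 : (M - Finsupp.single i p) k = m k + p := by
          rw [Finsupp.tsub_apply, Finsupp.single_apply, if_neg (Ne.symm hk), hMk]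
          omega
        omega
      · rfl
    rw [hR, Finset.sum_eq_single k] at key
    · have hle : Finsupp.single k (p + 1) ≤ M := Finsupp.single_le_iff.2 (by omega)
      rw [if_pos hle] at key
      have h1 : (M - Finsupp.single k (p + 1)) k = m k - 1 := by
        rw [Finsupp.tsub_apply, Finsupp.single_eq_same, hMk]
        omega
      have h2 : M - Finsupp.single k (p + 1) + Finsupp.single k 1 = m := by
        ext l
        rcases eq_or_ne l k with rfl | hl
        · rw [Finsupp.add_apply, Finsupp.tsub_apply, Finsupp.single_eq_same,
            Finsupp.single_eq_same, hMk]
          omega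
        · rw [Finsupp.add_apply, Finsupp.tsub_apply, Finsupp.single_apply,
            Finsupp.single_apply, if_neg (Ne.symm hl), if_neg (Ne.symm hl), hMl l hl]
          omega
      rw [h1, h2] at key
      have h3 : ((m k - 1 : ℕ) : ℝ) + 1 = (m k : ℝ) := by
        rw [Nat.cast_sub hmk]
        ring
      rw [h3] at key
      have hcg : coeff m g ≠ 0 := mem_support_iff.1 hms
      rcases mul_eq_zero.1 key with h | h
      · exact hc h
      · rcases mul_eq_zero.1 h with h' | h'
        · have : m k = 0 := Nat.cast_eq_zero.1 h'
          omega
        · exact hcg h'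
    · intro l _ hlk
      split_ifs with h
      · have hkc : ((M - Finsupp.single l (p + 1) + Finsupp.single l 1 : Fin n →₀ ℕ)) k
            = m k + p := by
          rw [Finsupp.add_apply, Finsupp.tsub_apply, Finsupp.single_apply,
            Finsupp.single_apply, if_neg hlk, if_neg hlk, hMk]
          omega
        have hz : coeff (M - Finsupp.single l (p + 1) + Finsupp.single l 1) g = 0 := by
          by_contra hne
          have := hmax _ (mem_support_iff.2 hne)
          rw [hkc] at this
          omega
        rw [hz, mul_zero, mul_zero]
      · rfl
    · intro h
      exact absurd (Finset.mem_univ k) h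
  -- Step 6: support of g is {single i (j+1)}
  have hB : ∀ m ∈ g.support, m = Finsupp.single i (j + 1) := by
    intro m hm
    have hmi : m = Finsupp.single i (m i) := by
      ext l
      rcases eq_or_ne l i with rfl | hl
      · rw [Finsupp.single_eq_same]
      · rw [Finsupp.single_apply, if_neg (Ne.symm hl)]
        exact hA l hl m hm
    have hw := hGhom j i (mem_support_iff.1 hm)
    rw [hmi] at hw
    rw [weight_one_single] at hw
    rw [hmi, hw]
  have hne : coeff (Finsupp.single i (j + 1)) g ≠ 0 := by
    obtain ⟨m, hm⟩ := (support_nonempty).2 hgi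
    have h := hB m hm
    rw [← h]
    exact mem_support_iff.1 hm
  -- Step 7: evaluate the coefficient equation at single i (j+1+p)
  set M : Fin n →₀ ℕ := Finsupp.single i (j + 1 + p) with hM
  have key := hEq M
  have hMsub : M - Finsupp.single i p = Finsupp.single i (j + 1) := by
    ext l
    rcases eq_or_ne l i with rfl | hl
    · rw [Finsupp.tsub_apply, Finsupp.single_eq_same, Finsupp.single_eq_same,
        Finsupp.single_eq_same]
      omega
    · rw [Finsupp.tsub_apply, Finsupp.single_apply, Finsupp.single_apply,
        Finsupp.single_apply, if_neg (Ne.symm hl), if_neg (Ne.symm hl), if_neg (Ne.symm hl)]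
      omega
  have hR : (if Finsupp.single i p ≤ M then coeff (M - Finsupp.single i p) g else 0)
      = coeff (Finsupp.single i (j + 1)) g := by
    rw [if_pos (Finsupp.single_le_iff.2 (by rw [hM, Finsupp.single_eq_same]; omega)), hMsub]
  rw [hR, Finset.sum_eq_single i] at key
  · have hle : Finsupp.single i (p + 1) ≤ M :=
      Finsupp.single_le_iff.2 (by rw [hM, Finsupp.single_eq_same]; omega)
    rw [if_pos hle] at key
    have h1 : (M - Finsupp.single i (p + 1)) i = j := by
      rw [hM]
      simp only [Finsupp.tsub_apply, Finsupp.single_eq_same]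
      omega
    have h2 : M - Finsupp.single i (p + 1) + Finsupp.single i 1 = Finsupp.single i (j + 1) := by
      ext l
      rcases eq_or_ne l i with rfl | hl
      · rw [hM]
        simp only [Finsupp.add_apply, Finsupp.tsub_apply, Finsupp.single_eq_same]
        omega
      · rw [hM]
        simp only [Finsupp.add_apply, Finsupp.tsub_apply, Finsupp.single_apply,
          if_neg (Ne.symm hl)]
        omega
    rw [h1, h2] at key
    -- key : c * ((j + 1) * coeff (single i (j+1)) g) = coeff (single i (j+1)) g
    have h4 : c * ((j : ℝ) + 1) = 1 := by
      refine mul_right_cancel₀ hne ?_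
      linear_combination key
    have h5 : ((j : ℝ) + 1) = ((p : ℝ) + 1) := by
      have h6 : ((p : ℝ) + 1) * (c * ((j : ℝ) + 1)) = ((p : ℝ) + 1) * 1 := by rw [h4]
      rw [hc_def, ← mul_assoc, mul_inv_cancel₀ hp1, one_mul, mul_one] at h6
      exact h6
    have h7 : j + 1 = p + 1 := by exact_mod_cast h5
    omega
  · intro l _ hli
    rw [if_neg]
    rw [Finsupp.single_le_iff, hM, Finsupp.single_apply, if_neg (Ne.symm hli)]
    omega
  · intro h
    exact absurd (Finset.mem_univ i) h
end
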